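/- For q ≥ 3 a prime power, with n = q²+q-1, k = q²-q-1, m = q²-q, and s = q, it holds that ns - ⌊(k-s)·((k-1)·C(m,s)/C(k-1,s) - n)/(m-k+1)⌋ = q³ - q. In particular (k-1)·C(m,q)/C(k-1,q) - n = (2q³-4q²)/(2(q-2))·(m-k+1)/(k-s) works out so that the displayed floor equals q². -/

import Mathlib

lemma auxQ (q d : ℕ) :
    ((q + d + 2).choose q : ℚ) * (((d : ℚ) + 2) * ((d : ℚ) + 1)) =
    ((q : ℚ) + d + 2) * ((q : ℚ) + d + 1) * ((q + d).choose q : ℚ) := by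
  have h1 := Nat.choose_mul_factorial_mul_factorial (show q ≤ q + d + 2 by omega)
  have h2 := Nat.choose_mul_factorial_mul_factorial (show q ≤ q + d by omega)
  have e1 : q + d + 2 - q = d + 2 := by omega
  have e2 : q + d - q = d := by omega
  rw [e1] at h1
  rw [e2] at h2
  have h1Q : ((q + d + 2).choose q : ℚ) * q.factorial * (d + 2).factorial
      = ((q + d + 2).factorial : ℚ) := by exact_mod_cast congrArg (Nat.cast (R := ℚ)) h1
  have h2Q : ((q + d).choose q : ℚ) * q.factorial * d.factorial
      = ((q + d).factorial : ℚ) := by exact_mod_cast congrArg (Nat.cast (R := ℚ)) h2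
  have f1 : ((d + 2).factorial : ℚ) = ((d : ℚ) + 2) * (((d : ℚ) + 1) * d.factorial) := by
    rw [Nat.factorial_succ, Nat.factorial_succ]; push_cast; ring
  have f2 : ((q + d + 2).factorial : ℚ)
      = ((q : ℚ) + d + 2) * (((q : ℚ) + d + 1) * (q + d).factorial) := by
    rw [show q + d + 2 = (q + d + 1) + 1 from rfl, Nat.factorial_succ, Nat.factorial_succ]
    push_cast; ring
  have hq0 : (q.factorial : ℚ) ≠ 0 := by
    exact_mod_cast q.factorial_ne_zero
  have hd0 : (d.factorial : ℚ) ≠ 0 := by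
    exact_mod_cast d.factorial_ne_zero
  apply mul_right_cancel₀ (mul_ne_zero hq0 hd0)
  calc ((q + d + 2).choose q : ℚ) * (((d : ℚ) + 2) * ((d : ℚ) + 1)) * (q.factorial * d.factorial)
      = ((q + d + 2).choose q : ℚ) * q.factorial * ((d + 2).factorial : ℚ) := by
        rw [f1]; ring
    _ = ((q + d + 2).factorial : ℚ) := h1Q
    _ = ((q : ℚ) + d + 2) * ((q : ℚ) + d + 1) * (((q + d).choose q : ℚ) * q.factorial * d.factorial) := by
        rw [f2, h2Q]; ring
    _ = ((q : ℚ) + d + 2) * ((q : ℚ) + d + 1) * ((q + d).choose q : ℚ) * (q.factorial * d.factorial) := by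
        ring

/-- For q ≥ 3 a prime power, with n = q²+q-1, k = q²-q-1, m = q²-q and
s = q, the quantity ⌊(k-s)·((k-1)·C(m,s)/C(k-1,s) - n)/(m-k+1)⌋ equals q², and hence
ns - ⌊(k-s)·((k-1)·C(m,s)/C(k-1,s) - n)/(m-k+1)⌋ = q³ - q. -/
theorem stmt_9 (q : ℕ) (hq : 3 ≤ q) (hpp : IsPrimePow q) :
    let n : ℚ := (q : ℚ) ^ 2 + q - 1
    let k : ℚ := (q : ℚ) ^ 2 - q - 1
    let m : ℚ := (q : ℚ) ^ 2 - q
    let U : ℚ := (k - 1) * ((q ^ 2 - q).choose q : ℚ) / ((q ^ 2 - q - 2).choose q : ℚ)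
    ⌊(k - q) * (U - n) / (m - k + 1)⌋ = (q : ℤ) ^ 2 ∧
    (q ^ 2 + q - 1 : ℤ) * q - ⌊(k - q) * (U - n) / (m - k + 1)⌋ = (q : ℤ) ^ 3 - q := by
  intro n k m U
  have hqQ : (3 : ℚ) ≤ (q : ℚ) := by exact_mod_cast hq
  have h2q : 2 * q + 2 ≤ q ^ 2 := by nlinarith
  obtain ⟨d, hd⟩ : ∃ d, q ^ 2 = 2 * q + 2 + d := ⟨q ^ 2 - (2 * q + 2), by omega⟩
  have e1 : q ^ 2 - q = q + d + 2 := by omega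
  have e2 : q ^ 2 - q - 2 = q + d := by omega
  have hdQ : (d : ℚ) = (q : ℚ) ^ 2 - 2 * q - 2 := by
    have := congrArg (Nat.cast (R := ℚ)) hd
    push_cast at this
    linarith
  have hy : ((q ^ 2 - q - 2).choose q : ℚ) ≠ 0 := by
    rw [e2]
    exact_mod_cast (Nat.choose_pos (show q ≤ q + d by omega)).ne'
  have hrel : ((q ^ 2 - q).choose q : ℚ) * (((q:ℚ)^2 - 2*q) * ((q:ℚ)^2 - 2*q - 1))
      = ((q:ℚ)^2 - q) * ((q:ℚ)^2 - q - 1) * ((q ^ 2 - q - 2).choose q : ℚ) := by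
    have := auxQ q d
    rw [← e1, ← e2] at this
    rw [hdQ] at this
    linear_combination this
  have hz1 : (q:ℚ)^2 - 2*q ≠ 0 := by nlinarith
  have hz2 : (q:ℚ)^2 - 2*q - 1 ≠ 0 := by nlinarith
  have hx : ((q ^ 2 - q).choose q : ℚ)
      = ((q:ℚ)^2 - q) * ((q:ℚ)^2 - q - 1) * ((q ^ 2 - q - 2).choose q : ℚ)
        / (((q:ℚ)^2 - 2*q) * ((q:ℚ)^2 - 2*q - 1)) := by
    rw [eq_div_iff (mul_ne_zero hz1 hz2)]
    linear_combination hrel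
  have hE : (k - q) * (U - n) / (m - k + 1) = (q : ℚ) ^ 2 := by
    show (((q : ℚ) ^ 2 - q - 1) - q) *
        ((((q : ℚ) ^ 2 - q - 1) - 1) * ((q ^ 2 - q).choose q : ℚ) / ((q ^ 2 - q - 2).choose q : ℚ)
          - ((q : ℚ) ^ 2 + q - 1)) / (((q : ℚ) ^ 2 - q) - ((q : ℚ) ^ 2 - q - 1) + 1) = (q : ℚ) ^ 2
    rw [hx]
    rw [div_eq_iff (by norm_num)]
    have hU : (((q : ℚ) ^ 2 - q - 1) - 1) * (((q:ℚ)^2 - q) * ((q:ℚ)^2 - q - 1) * ((q ^ 2 - q - 2).choose q : ℚ)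
            / (((q:ℚ)^2 - 2*q) * ((q:ℚ)^2 - 2*q - 1))) / ((q ^ 2 - q - 2).choose q : ℚ)
        = (((q : ℚ) ^ 2 - q - 1) - 1) * (((q:ℚ)^2 - q) * ((q:ℚ)^2 - q - 1))
            / (((q:ℚ)^2 - 2*q) * ((q:ℚ)^2 - 2*q - 1)) := by
      field_simp
    rw [hU, div_sub' (mul_ne_zero hz1 hz2), mul_div_assoc', div_eq_iff (mul_ne_zero hz1 hz2)]
    ring
  rw [hE]
  have hfl : ⌊((q : ℚ) ^ 2)⌋ = (q : ℤ) ^ 2 := by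
    rw [show ((q : ℚ) ^ 2) = (((q : ℤ) ^ 2 : ℤ) : ℚ) by push_cast; ring, Int.floor_intCast]
  refine ⟨hfl, ?_⟩
  rw [hfl]
  ring
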